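/- Let U be a d×d unitary matrix, let α, β : Fin d → ℕ be multi-indices, and let c ∈ ℂ. If the polynomial identity ∏_{i=1}^{d} (Σ_{j=1}^{d} U_{ij} X_j)^{α_i} = c · ∏_{i=1}^{d} X_i^{β_i} holds in ℂ[X_1,…,X_d], then c ≠ 0 and there exists a permutation σ of Fin d such that β_i = α_{σ(i)} for all i. (Two Fock states can be related deterministically by linear optics only if they have the same photon counts up to a permutation of the modes.) -/

import Mathlib

open MvPolynomial

lemma exists_zero_pt (d : ℕ) (a : Fin d → ℂ) (j1 j2 : Fin d) (hne : j1 ≠ j2)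
    (h1 : a j1 ≠ 0) (h2 : a j2 ≠ 0) :
    ∃ x : Fin d → ℂ, (∀ j, x j ≠ 0) ∧ ∑ j, a j * x j = 0 := by
  set s : ℂ := ∑ j ∈ Finset.univ \ {j1, j2}, a j with hs
  set t : ℂ := if s = 0 then 1 else s / a j2 with ht
  have hst : s + a j2 * t ≠ 0 := by
    rw [ht]; split_ifs with h
    · simpa [h] using h2
    · have hat : a j2 * (s / a j2) = s := by field_simp
      rw [hat]; intro hc; exact h (add_self_eq_zero.mp hc)
  have htne : t ≠ 0 := by
    rw [ht]; split_ifs with h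
    · exact one_ne_zero
    · exact div_ne_zero h h2
  refine ⟨fun j => if j = j1 then -(s + a j2 * t)/(a j1) else if j = j2 then t else 1, ?_, ?_⟩
  · intro j
    dsimp only
    split_ifs with hj hj'
    · exact div_ne_zero (neg_ne_zero.mpr hst) h1
    · exact htne
    · exact one_ne_zero
  · have hsub : ({j1, j2} : Finset (Fin d)) ⊆ Finset.univ := Finset.subset_univ _
    dsimp only
    rw [← Finset.sum_sdiff hsub]
    have e1 : ∑ j ∈ Finset.univ \ {j1, j2},
        a j * (if j = j1 then -(s + a j2 * t)/(a j1) else if j = j2 then t else 1) = s := by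
      rw [hs]
      apply Finset.sum_congr rfl
      intro j hj
      simp only [Finset.mem_sdiff, Finset.mem_insert, Finset.mem_singleton] at hj
      rw [if_neg (by tauto), if_neg (by tauto), mul_one]
    have e2 : ∑ j ∈ ({j1, j2} : Finset (Fin d)),
        a j * (if j = j1 then -(s + a j2 * t)/(a j1) else if j = j2 then t else 1)
        = -(s + a j2 * t) + a j2 * t := by
      rw [Finset.sum_pair hne, if_pos rfl, if_neg hne.symm, if_pos rfl]
      field_simp
    rw [e1, e2]; ring

lemma prod_monomial_one {ι σ : Type*} (s : Finset ι) (f : ι → (σ →₀ ℕ)) :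
    ∏ i ∈ s, (monomial (f i) (1:ℂ)) = monomial (∑ i ∈ s, f i) 1 := by
  classical
  induction s using Finset.induction_on with
  | empty => simp [monomial_zero']
  | insert _ _ hx ih =>
      rw [Finset.prod_insert hx, Finset.sum_insert hx, ih, monomial_mul, mul_one]

/-- If `U` is unitary and
`∏ i (Σ j U i j • X j)^(α i) = c • ∏ i X i ^ (β i)` holds in `ℂ[X_1,…,X_d]`, then `c ≠ 0`
and `β` is a permutation of `α`: two Fock states can be deterministically related by linear
optics only if their photon counts agree up to a permutation of the modes. -/
theorem fock_state_linear_optics (d : ℕ) (U : Matrix (Fin d) (Fin d) ℂ)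
    (hU : U ∈ Matrix.unitaryGroup (Fin d) ℂ) (α β : Fin d → ℕ) (c : ℂ)
    (h : ∏ i : Fin d, (∑ j : Fin d, U i j • (X j : MvPolynomial (Fin d) ℂ)) ^ (α i) =
        C c * ∏ i : Fin d, (X i : MvPolynomial (Fin d) ℂ) ^ (β i)) :
    c ≠ 0 ∧ ∃ σ : Equiv.Perm (Fin d), ∀ i, β i = α (σ i) := by
  classical
  -- unitarity: rows are orthonormal
  have hUU : ∀ i k, (∑ j, U i j * star (U k j)) = if i = k then 1 else 0 := by
    intro i k
    have h2 := congrFun (congrFun (Matrix.mem_unitaryGroup_iff.mp hU) i) k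
    simpa [Matrix.mul_apply, Matrix.one_apply, Matrix.conjTranspose_apply] using h2
  -- each linear form is nonzero
  have hL : ∀ i : Fin d, (∑ j, U i j • (X j : MvPolynomial (Fin d) ℂ)) ≠ 0 := by
    intro i hL0
    have he := congrArg (eval fun j => star (U i j)) hL0
    simp only [smul_eq_C_mul, map_sum, eval_mul, eval_C, eval_X, map_zero] at he
    rw [hUU i i, if_pos rfl] at he
    exact one_ne_zero he
  -- c is nonzero
  have hc : c ≠ 0 := by
    intro hc0
    rw [hc0, map_zero, zero_mul] at h
    obtain ⟨i, -, hi⟩ := Finset.prod_eq_zero_iff.mp h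
    exact hL i (pow_eq_zero_iff'.mp hi).1
  refine ⟨hc, ?_⟩
  -- every row used with positive multiplicity has a unique nonzero entry
  have huniq : ∀ i : Fin d, 0 < α i → ∃! j, U i j ≠ 0 := by
    intro i hi
    have hex : ∃ j, U i j ≠ 0 := by
      by_contra hall
      push_neg at hall
      have := hUU i i
      simp [hall] at this
    obtain ⟨j0, hj0⟩ := hex
    refine ⟨j0, hj0, ?_⟩
    intro j1 hj1
    by_contra hne
    obtain ⟨x, hxne, hx0⟩ := exists_zero_pt d (U i) j1 j0 hne hj1 hj0
    have he := congrArg (eval x) h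
    simp only [smul_eq_C_mul, map_prod, map_pow, map_sum, eval_mul, eval_C, eval_X] at he
    rw [Finset.prod_eq_zero (Finset.mem_univ i) (by rw [hx0]; exact zero_pow hi.ne')] at he
    have : c * ∏ i, x i ^ β i ≠ 0 :=
      mul_ne_zero hc (Finset.prod_ne_zero_iff.mpr fun j _ => pow_ne_zero _ (hxne j))
    exact this he.symm
  set g : Fin d → Fin d := fun i => if hi : 0 < α i then (huniq i hi).choose else i with hg
  have hg1 : ∀ i, 0 < α i → U i (g i) ≠ 0 := by
    intro i hi; rw [hg]; simp only [dif_pos hi]; exact (huniq i hi).choose_spec.1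
  have hg2 : ∀ i, 0 < α i → ∀ j, U i j ≠ 0 → j = g i := by
    intro i hi j hj; rw [hg]; simp only [dif_pos hi]; exact (huniq i hi).choose_spec.2 j hj
  have hg2' : ∀ i, 0 < α i → ∀ j, j ≠ g i → U i j = 0 := by
    intro i hi j hj; by_contra hne; exact hj (hg2 i hi j hne)
  have hginj : ∀ i i', 0 < α i → 0 < α i' → g i = g i' → i = i' := by
    intro i i' hi hi' hgg
    by_contra hne
    have h0 := hUU i i'
    rw [if_neg hne] at h0
    rw [Finset.sum_eq_single (g i) (fun j _ hj => by rw [hg2' i hi j hj, zero_mul])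
      (fun habs => absurd (Finset.mem_univ _) habs)] at h0
    rw [hgg] at h0
    exact mul_ne_zero (hgg ▸ hg1 i hi) (star_ne_zero.mpr (hg1 i' hi')) h0
  -- each factor of the left side is a monomial
  have hLi : ∀ i : Fin d, (∑ j, U i j • (X j : MvPolynomial (Fin d) ℂ)) ^ (α i)
      = C ((U i (g i)) ^ (α i)) * monomial (Finsupp.single (g i) (α i)) 1 := by
    intro i
    rcases Nat.eq_zero_or_pos (α i) with h0 | hi
    · simp [h0]
    · have hsum : (∑ j, U i j • (X j : MvPolynomial (Fin d) ℂ)) = C (U i (g i)) * X (g i) := by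
        rw [Finset.sum_eq_single (g i) (fun j _ hj => by rw [hg2' i hi j hj]; simp)
          (fun habs => absurd (Finset.mem_univ _) habs), smul_eq_C_mul]
      rw [hsum, mul_pow, ← map_pow, X_pow_eq_monomial]
  have hmL : ∏ i : Fin d, (∑ j : Fin d, U i j • (X j : MvPolynomial (Fin d) ℂ)) ^ (α i)
      = monomial (∑ i, Finsupp.single (g i) (α i)) (∏ i, (U i (g i)) ^ (α i)) := by
    rw [Finset.prod_congr rfl (fun i _ => hLi i), Finset.prod_mul_distrib, ← map_prod,
      prod_monomial_one, C_mul_monomial, mul_one]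
  have hmR : (C c * ∏ i : Fin d, (X i : MvPolynomial (Fin d) ℂ) ^ (β i))
      = monomial (∑ i, Finsupp.single i (β i)) c := by
    rw [Finset.prod_congr rfl (fun i _ => X_pow_eq_monomial ..), prod_monomial_one,
      C_mul_monomial, mul_one]
  rw [hmL, hmR] at h
  rcases (monomial_eq_monomial_iff _ _ _ _).mp h with ⟨hsum, -⟩ | ⟨-, hc0⟩
  swap
  · exact absurd hc0 hc
  have hβ : ∀ j, β j = ∑ i, if g i = j then α i else 0 := by
    intro j
    have := congrArg (fun f => f j) hsum
    simp only [Finsupp.finset_sum_apply, Finsupp.single_apply] at this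
    rw [this, Finset.sum_ite_eq' Finset.univ j β, if_pos (Finset.mem_univ j)]
  have hβg : ∀ i, 0 < α i → β (g i) = α i := by
    intro i hi
    rw [hβ (g i), Finset.sum_eq_single i
      (fun i' _ hne => by
        split_ifs with hgg
        · by_contra hne0
          exact hne (hginj i' i (Nat.pos_of_ne_zero hne0) hi hgg)
        · rfl)
      (fun habs => absurd (Finset.mem_univ _) habs), if_pos rfl]
  have hβ0 : ∀ j, (∀ i, 0 < α i → g i ≠ j) → β j = 0 := by
    intro j hj
    rw [hβ j]
    apply Finset.sum_eq_zero
    intro i _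
    split_ifs with hgg
    · by_contra hne0
      exact hj i (Nat.pos_of_ne_zero hne0) hgg
    · rfl
  -- build the permutation
  set q : Fin d → Prop := fun i => 0 < α i with hq
  set gg : {i // q i} → Fin d := fun i => g i.val with hgg
  have hgginj : Function.Injective gg := by
    intro a b hab
    exact Subtype.ext (hginj a.val b.val a.prop b.prop hab)
  set p : Fin d → Prop := fun j => j ∈ Set.range gg with hp
  let e1 : {i // q i} ≃ Set.range gg := Equiv.ofInjective gg hgginj
  have hcard : Fintype.card {j // ¬ p j} = Fintype.card {i // ¬ q i} := by
    rw [Fintype.card_subtype_compl, Fintype.card_subtype_compl]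
    congr 1
    exact (Fintype.card_congr e1).symm
  let e2 : {j // ¬ p j} ≃ {i // ¬ q i} := Fintype.equivOfCardEq hcard
  refine ⟨(Equiv.sumCompl p).symm.trans ((Equiv.sumCongr e1.symm e2).trans (Equiv.sumCompl q)), ?_⟩
  intro i
  by_cases hi : p i
  · rw [Equiv.trans_apply, Equiv.trans_apply, Equiv.sumCompl_symm_apply_of_pos hi]
    simp only [Equiv.sumCongr_apply, Sum.map_inl, Equiv.sumCompl_apply_inl]
    set k := e1.symm ⟨i, hi⟩ with hk
    have : gg k = i := by
      have := e1.apply_symm_apply ⟨i, hi⟩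
      rw [← hk] at this
      exact congrArg Subtype.val this
    rw [← this]
    exact hβg k.val k.prop
  · rw [Equiv.trans_apply, Equiv.trans_apply, Equiv.sumCompl_symm_apply_of_neg hi]
    simp only [Equiv.sumCongr_apply, Sum.map_inr, Equiv.sumCompl_apply_inr]
    have hα0 : α ((e2 ⟨i, hi⟩ : {i // ¬ q i}) : Fin d) = 0 :=
      Nat.eq_zero_of_not_pos (e2 ⟨i, hi⟩).prop
    rw [hα0]
    apply hβ0
    intro i' hi' hgg
    exact hi ⟨⟨i', hi'⟩, hgg⟩
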